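/- Let e be a finite set of r ≥ 4 nodes and q = ⌊r/2⌋. Let f : 2^e → ℝ be a cardinality-based splitting function, i.e., f(S) = w_{min(|S|, |e \ S|)} for a sequence of penalties w_0 = 0, w_1, …, w_q. If f is submodular, then the penalties satisfy: (i) 2w_1 ≥ w_2; (ii) 2w_j ≥ w_{j−1} + w_{j+1} for all j with 2 ≤ j ≤ q−1; and (iii) 0 ≤ w_1 ≤ w_2 ≤ … ≤ w_q. -/

import Mathlib

set_option maxHeartbeats 1000000

lemma key_pair {α : Type*} [Fintype α] [DecidableEq α] (i j : ℕ) (hij : i ≤ j)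
    (hjr : 2 * j - i ≤ Fintype.card α) :
    ∃ A B : Finset α, A.card = j ∧ B.card = j ∧ (A ∩ B).card = i ∧
      (A ∪ B).card = 2 * j - i := by
  obtain ⟨C, -, hC⟩ := Finset.exists_subset_card_eq (s := Finset.univ) (n := 2 * j - i)
    (by simpa using hjr)
  obtain ⟨D, hDC, hD⟩ := Finset.exists_subset_card_eq (s := C) (n := j) (by omega)
  obtain ⟨I, hID, hI⟩ := Finset.exists_subset_card_eq (s := D) (n := i) (by omega)
  refine ⟨D, I ∪ (C \ D), hD, ?_, ?_, ?_⟩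
  · have hdisj : Disjoint I (C \ D) :=
      Finset.disjoint_sdiff.mono_left hID
    rw [Finset.card_union_of_disjoint hdisj, hI, Finset.card_sdiff_of_subset hDC, hC, hD]
    omega
  · have : D ∩ (I ∪ (C \ D)) = I := by
      ext x
      simp only [Finset.mem_inter, Finset.mem_union, Finset.mem_sdiff]
      constructor
      · rintro ⟨hxD, hxI | ⟨_, hxnD⟩⟩
        · exact hxI
        · exact absurd hxD hxnD
      · intro hxI; exact ⟨hID hxI, Or.inl hxI⟩
    rw [this, hI]
  · have : D ∪ (I ∪ (C \ D)) = C := by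
      ext x
      simp only [Finset.mem_union, Finset.mem_sdiff]
      constructor
      · rintro (hxD | hxI | ⟨hxC, -⟩)
        · exact hDC hxD
        · exact hDC (hID hxI)
        · exact hxC
      · intro hxC
        by_cases hxD : x ∈ D
        · exact Or.inl hxD
        · exact Or.inr (Or.inr ⟨hxC, hxD⟩)
    rw [this, hC]

/-- a submodular cardinality-based splitting function on an `r`-node
hyperedge (`r ≥ 4`), with penalties `w i = f S` whenever `min |S| |e \ S| = i`,
satisfies `2w₁ ≥ w₂`, `2w_j ≥ w_{j-1} + w_{j+1}` for `2 ≤ j ≤ q - 1`, and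
`0 ≤ w₁ ≤ w₂ ≤ ⋯ ≤ w_q`, where `q = ⌊r/2⌋`. -/
theorem stmt_3 {α : Type*} [Fintype α] [DecidableEq α] (r : ℕ) (hr : 4 ≤ r)
    (hcard : Fintype.card α = r)
    (w : ℕ → ℝ) (hw0 : w 0 = 0)
    (f : Finset α → ℝ)
    (hf : ∀ S : Finset α, f S = w (min S.card (Sᶜ : Finset α).card))
    (hnn : ∀ S : Finset α, 0 ≤ f S)
    (hsub : ∀ A B : Finset α, f (A ∩ B) + f (A ∪ B) ≤ f A + f B) :
    2 * w 1 ≥ w 2 ∧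
    (∀ j : ℕ, 2 ≤ j → j + 1 ≤ r / 2 → 2 * w j ≥ w (j - 1) + w (j + 1)) ∧
    (0 ≤ w 1 ∧ ∀ j : ℕ, 1 ≤ j → j + 1 ≤ r / 2 → w j ≤ w (j + 1)) := by
  have hfval : ∀ S : Finset α, f S = w (min S.card (r - S.card)) := by
    intro S
    rw [hf S, Finset.card_compl, hcard]
  -- general concavity for 1 ≤ j:
  have conc : ∀ j : ℕ, 1 ≤ j → j + 1 ≤ r / 2 → 2 * w j ≥ w (j - 1) + w (j + 1) := by
    intro j hj1 hjq
    have h2j : 2 * (j + 1) ≤ r := by omega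
    obtain ⟨A, B, hA, hB, hAB, hABu⟩ := key_pair (α := α) (j - 1) j (by omega)
      (by rw [hcard]; omega)
    have h := hsub A B
    rw [hfval A, hfval B, hfval (A ∩ B), hfval (A ∪ B), hA, hB, hAB, hABu] at h
    have e1 : min j (r - j) = j := by omega
    have e2 : min (j - 1) (r - (j - 1)) = j - 1 := by omega
    have e3 : min (2 * j - (j - 1)) (r - (2 * j - (j - 1))) = j + 1 := by omega
    rw [e1, e2, e3] at h
    linarith
  -- base monotonicity at the top: w (r/2 - 1) ≤ w (r/2)
  have hq2 : 2 ≤ r / 2 := by omega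
  have base : w (r / 2 - 1) ≤ w (r / 2) := by
    obtain ⟨q, hqd⟩ : ∃ q, q = r / 2 := ⟨_, rfl⟩
    rw [← hqd]
    rcases Nat.even_or_odd r with ⟨m, hm⟩ | ⟨m, hm⟩
    · have hq : q = m := by omega
      obtain ⟨A, B, hA, hB, hAB, hABu⟩ := key_pair (α := α) (q - 1) q (by omega)
        (by rw [hcard]; omega)
      have h := hsub A B
      rw [hfval A, hfval B, hfval (A ∩ B), hfval (A ∪ B), hA, hB, hAB, hABu] at h
      have e1 : min q (r - q) = q := by omega
      have e2 : min (q - 1) (r - (q - 1)) = q - 1 := by omega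
      have e3 : min (2 * q - (q - 1)) (r - (2 * q - (q - 1))) = q - 1 := by omega
      rw [e1, e2, e3] at h
      linarith
    · have hq : q = m := by omega
      obtain ⟨A, B, hA, hB, hAB, hABu⟩ := key_pair (α := α) q (q + 1) (by omega)
        (by rw [hcard]; omega)
      have h := hsub A B
      rw [hfval A, hfval B, hfval (A ∩ B), hfval (A ∪ B), hA, hB, hAB, hABu] at h
      have e1 : min (q + 1) (r - (q + 1)) = q := by omega
      have e2 : min q (r - q) = q := by omega
      have e3 : min (2 * (q + 1) - q) (r - (2 * (q + 1) - q)) = q - 1 := by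
        clear h e1 e2 hA hB hAB hABu hfval hsub hnn hf conc
        omega
      rw [e1, e2, e3] at h
      linarith
  -- monotonicity by downward induction
  have mono : ∀ k j : ℕ, 1 ≤ j → j + 1 + k = r / 2 → w j ≤ w (j + 1) := by
    intro k
    induction k with
    | zero =>
      intro j hj1 hj2
      have : j = r / 2 - 1 := by omega
      subst this
      have : r / 2 - 1 + 1 = r / 2 := by omega
      rw [this]
      exact base
    | succ k ih =>
      intro j hj1 hj2
      have h1 := conc (j + 1) (by omega) (by omega)
      have h2 := ih (j + 1) (by omega) (by omega)
      have : j + 1 - 1 = j := by omega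
      rw [this] at h1
      linarith
  have hw1 : 0 ≤ w 1 := by
    obtain ⟨A, B, hA, -, -, -⟩ := key_pair (α := α) 1 1 le_rfl (by omega)
    have := hnn A
    rw [hfval A, hA] at this
    have e : min 1 (r - 1) = 1 := by omega
    rwa [e] at this
  refine ⟨?_, fun j hj2 hjq => conc j (by omega) hjq, hw1, fun j hj1 hjq => ?_⟩
  · have h := conc 1 le_rfl (by omega)
    simpa [hw0] using h
  · exact mono (r / 2 - (j + 1)) j hj1 (by omega)
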